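/- arXiv:math/0108005 — 5 statements merged into one kernel-verified Lean document; each statement's English description precedes it below -/
import Mathlib

section
/- Let X be a compact topological space with a distinguished point e and a regular Borel probability measure dx of full support. Let g be a continuous function on X with 0 ≤ g ≤ 1, g(e) = 1, and g(x) < 1 for all x ≠ e. Then the probability measures with densities gⁿ/‖gⁿ‖₁ converge weak-* to the Dirac measure at e; that is, for every continuous function f on X, ∫ f(x) gⁿ(x) dx / ∫ gⁿ(x) dx → f(e) as n → ∞. -/
open MeasureTheory Filter

/-- On a compact space with a fully supported regular Borel probability
measure, if `0 ≤ g ≤ 1`, `g e = 1` and `g x < 1` for `x ≠ e`, then the probability measures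
with densities `g^n / ‖g^n‖₁` converge weak-* to the Dirac measure at `e`. -/
theorem stmt_0 {X : Type*} [TopologicalSpace X] [CompactSpace X] [T2Space X]
    [MeasurableSpace X] [BorelSpace X]
    (μ : Measure X) [IsProbabilityMeasure μ] [μ.Regular] [μ.IsOpenPosMeasure]
    (e : X) (g : X → ℝ) (hg : Continuous g)
    (hg0 : ∀ x, 0 ≤ g x) (hg1 : ∀ x, g x ≤ 1)
    (hge : g e = 1) (hlt : ∀ x, x ≠ e → g x < 1)
    (f : X → ℝ) (hf : Continuous f) :
    Tendsto (fun n : ℕ => (∫ x, f x * g x ^ n ∂μ) / ∫ x, g x ^ n ∂μ)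
      atTop (nhds (f e)) := by
  have hint : ∀ (h : X → ℝ), Continuous h → Integrable h μ := fun h hh =>
    hh.integrable_of_hasCompactSupport (HasCompactSupport.of_compactSpace h)
  rw [Metric.tendsto_atTop]
  intro ε hε
  -- the neighborhood where f is close to f e
  set U : Set X := {x | |f x - f e| < ε / 2} with hU_def
  have hUopen : IsOpen U := isOpen_lt ((hf.sub continuous_const).abs) continuous_const
  have heU : e ∈ U := by simp [hU_def, half_pos hε]
  -- a bound c < 1 for g on the complement of U
  obtain ⟨c, hc0, hc1, hcK⟩ : ∃ c, 0 ≤ c ∧ c < 1 ∧ ∀ x ∈ Uᶜ, g x ≤ c := by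
    by_cases hK : (Uᶜ : Set X).Nonempty
    · obtain ⟨x₀, hx₀K, hx₀⟩ := (hUopen.isClosed_compl.isCompact).exists_isMaxOn hK
        (hg.continuousOn)
      refine ⟨g x₀, hg0 x₀, hlt x₀ ?_, fun x hx => hx₀ hx⟩
      rintro rfl; exact hx₀K heU
    · exact ⟨0, le_rfl, one_pos, fun x hx => absurd ⟨x, hx⟩ hK⟩
  obtain ⟨b, hcb, hb1⟩ : ∃ b, c < b ∧ b < 1 := ⟨(c + 1) / 2, by linarith, by linarith⟩
  have hb0 : 0 < b := lt_of_le_of_lt hc0 hcb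
  -- a neighborhood of e where g > b, of positive measure
  set V : Set X := {x | b < g x} with hV_def
  have hVopen : IsOpen V := isOpen_lt continuous_const hg
  have heV : e ∈ V := by simp [hV_def, hge, hb1]
  set m : ℝ := (μ V).toReal with hm_def
  have hm0 : 0 < m := ENNReal.toReal_pos (hVopen.measure_pos μ ⟨e, heV⟩).ne' (measure_ne_top μ V)
  clear_value m
  -- bound on |f x - f e|
  obtain ⟨x₁, -, hx₁⟩ := isCompact_univ.exists_isMaxOn ⟨e, Set.mem_univ e⟩
    ((hf.sub continuous_const).abs.continuousOn)
  obtain ⟨M, hM_def⟩ : ∃ M : ℝ, M = |f x₁ - f e| := ⟨_, rfl⟩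
  have hM0 : 0 ≤ M := hM_def ▸ abs_nonneg _
  have hMb : ∀ x, |f x - f e| ≤ M := fun x => hM_def ▸ hx₁ (Set.mem_univ x)
  -- integrability facts
  have hgn_int : ∀ n : ℕ, Integrable (fun x => g x ^ n) μ := fun n =>
    hint _ (hg.pow n)
  have hgn_nonneg : ∀ n : ℕ, ∀ x, (0:ℝ) ≤ g x ^ n := fun n x => pow_nonneg (hg0 x) n
  -- lower bound on ∫ g^n
  have hIlb : ∀ n : ℕ, b ^ n * m ≤ ∫ x, g x ^ n ∂μ := by
    intro n
    have h1 : b ^ n * m ≤ ∫ x in V, g x ^ n ∂μ := by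
      rw [hm_def]
      refine (le_of_eq (mul_comm (b ^ n) (μ V).toReal)).trans (setIntegral_ge_of_const_le hVopen.measurableSet (measure_ne_top μ V)
        (fun x hx => pow_le_pow_left₀ hb0.le (le_of_lt hx) n) ((hgn_int n).integrableOn))
    exact h1.trans (setIntegral_le_integral (hgn_int n)
      (Filter.Eventually.of_forall (hgn_nonneg n)))
  have hIpos : ∀ n : ℕ, 0 < ∫ x, g x ^ n ∂μ := fun n =>
    lt_of_lt_of_le (by positivity) (hIlb n)
  -- the key estimate
  have hkey : ∀ n : ℕ, |(∫ x, f x * g x ^ n ∂μ) - f e * ∫ x, g x ^ n ∂μ|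
      ≤ ε / 2 * (∫ x, g x ^ n ∂μ) + M * c ^ n := by
    intro n
    have hdiff : (∫ x, f x * g x ^ n ∂μ) - f e * ∫ x, g x ^ n ∂μ
        = ∫ x, (f x - f e) * g x ^ n ∂μ := by
      have h2 : ∫ x, (f x - f e) * g x ^ n ∂μ
          = ∫ x, (f x * g x ^ n - f e * g x ^ n) ∂μ := by
        congr 1; ext x; ring
      rw [h2, integral_sub (hint (fun x => f x * g x ^ n) (hf.mul (hg.pow n)))
        (hint (fun x => f e * g x ^ n) (continuous_const.mul (hg.pow n))), integral_const_mul]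
    rw [hdiff]
    have habs : |∫ x, (f x - f e) * g x ^ n ∂μ| ≤ ∫ x, |f x - f e| * g x ^ n ∂μ := by
      calc |∫ x, (f x - f e) * g x ^ n ∂μ| ≤ ∫ x, |(f x - f e) * g x ^ n| ∂μ :=
            norm_integral_le_integral_norm (μ := μ) fun x => (f x - f e) * g x ^ n
        _ = ∫ x, |f x - f e| * g x ^ n ∂μ := by
            congr 1; ext x
            rw [abs_mul, abs_of_nonneg (hgn_nonneg n x)]
    refine habs.trans ?_
    have hintabs : Integrable (fun x => |f x - f e| * g x ^ n) μ :=
      hint _ (((hf.sub continuous_const).abs).mul (hg.pow n))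
    rw [← integral_add_compl hUopen.measurableSet hintabs]
    have hU_part : ∫ x in U, |f x - f e| * g x ^ n ∂μ ≤ ε / 2 * ∫ x, g x ^ n ∂μ := by
      calc ∫ x in U, |f x - f e| * g x ^ n ∂μ ≤ ∫ x in U, ε / 2 * g x ^ n ∂μ := by
            refine setIntegral_mono_on hintabs.integrableOn
              ((hgn_int n).const_mul _).integrableOn hUopen.measurableSet
              (fun x hx => mul_le_mul_of_nonneg_right (le_of_lt hx) (hgn_nonneg n x))
        _ = ε / 2 * ∫ x in U, g x ^ n ∂μ := by rw [integral_const_mul]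
        _ ≤ ε / 2 * ∫ x, g x ^ n ∂μ := by
            refine mul_le_mul_of_nonneg_left (setIntegral_le_integral (hgn_int n)
              (Filter.Eventually.of_forall (hgn_nonneg n))) (half_pos hε).le
    have hK_part : ∫ x in Uᶜ, |f x - f e| * g x ^ n ∂μ ≤ M * c ^ n := by
      calc ∫ x in Uᶜ, |f x - f e| * g x ^ n ∂μ ≤ ∫ x in Uᶜ, M * c ^ n ∂μ := by
            refine setIntegral_mono_on hintabs.integrableOn
              integrableOn_const
              hUopen.measurableSet.compl (fun x hx => ?_)
            exact mul_le_mul (hMb x) (pow_le_pow_left₀ (hg0 x) (hcK x hx) n)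
              (hgn_nonneg n x) hM0
        _ = (μ Uᶜ).toReal * (M * c ^ n) := by rw [setIntegral_const, smul_eq_mul]; rfl
        _ ≤ 1 * (M * c ^ n) := by
            refine mul_le_mul_of_nonneg_right ?_ (by positivity)
            exact ENNReal.toReal_le_of_le_ofReal one_pos.le
              (by simpa using prob_le_one (μ := μ))
        _ = M * c ^ n := one_mul _
    linarith
  -- choose N using (c/b)^n → 0
  have hcb_lt : c / b < 1 := (div_lt_one hb0).2 hcb
  have hcb_nonneg : 0 ≤ c / b := div_nonneg hc0 hb0.le
  have htend : Tendsto (fun n : ℕ => M / m * (c / b) ^ n) atTop (nhds 0) := by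
    simpa using (tendsto_pow_atTop_nhds_zero_of_lt_one hcb_nonneg hcb_lt).const_mul (M / m)
  have hev : ∀ᶠ n in atTop, M / m * (c / b) ^ n < ε / 2 :=
    htend.eventually (gt_mem_nhds (half_pos hε))
  obtain ⟨N, hN⟩ := hev.exists_forall_of_atTop
  refine ⟨N, fun n hn => ?_⟩
  have hIn := hIpos n
  rw [Real.dist_eq]
  have : (∫ x, f x * g x ^ n ∂μ) / (∫ x, g x ^ n ∂μ) - f e
      = ((∫ x, f x * g x ^ n ∂μ) - f e * ∫ x, g x ^ n ∂μ) / (∫ x, g x ^ n ∂μ) := by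
    field_simp
  rw [this, abs_div, abs_of_pos hIn]
  have h1 : |(∫ x, f x * g x ^ n ∂μ) - f e * ∫ x, g x ^ n ∂μ| / (∫ x, g x ^ n ∂μ)
      ≤ ε / 2 + M * c ^ n / (∫ x, g x ^ n ∂μ) := by
    have := (div_le_div_iff_of_pos_right hIn).2 (hkey n)
    calc |(∫ x, f x * g x ^ n ∂μ) - f e * ∫ x, g x ^ n ∂μ| / (∫ x, g x ^ n ∂μ)
        ≤ (ε / 2 * (∫ x, g x ^ n ∂μ) + M * c ^ n) / (∫ x, g x ^ n ∂μ) := this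
      _ = ε / 2 + M * c ^ n / (∫ x, g x ^ n ∂μ) := by
          rw [add_div, mul_div_assoc, div_self hIn.ne', mul_one]
  refine lt_of_le_of_lt h1 ?_
  have h2 : M * c ^ n / (∫ x, g x ^ n ∂μ) ≤ M * c ^ n / (b ^ n * m) := by
    exact div_le_div_of_nonneg_left (by positivity) (by positivity) (hIlb n)
  have h3 : M * c ^ n / (b ^ n * m) = M / m * (c / b) ^ n := by
    rw [div_pow, div_mul_div_comm, mul_comm m (b ^ n)]
  have h4 := hN n hn
  linarith [h2.trans_eq h3]
end

section
/- Let G be a compact group acting ergodically by α on a unital C*-algebra B (the only invariant elements are scalars), with continuous length function ℓ and seminorm L(T) = sup{‖α_x(T) − T‖/ℓ(x) : x ≠ e}. Then ‖T‖~ ≤ r·L(T) for all T ∈ B, where ‖T‖~ = inf{‖T + tI‖ : t ∈ ℂ} is the quotient norm on B/ℂI and r = ∫_G ℓ(x) dx. -/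
open MeasureTheory

lemma aux_isometry {B : Type*} [NormedRing B] [StarRing B] [CStarRing B] [NormedAlgebra ℂ B]
    [StarModule ℂ B] [CompleteSpace B] (φ : B ≃⋆ₐ[ℂ] B) : Isometry φ := by
  let i : CStarAlgebra B := { }
  exact @StarAlgEquiv.isometry (B ≃⋆ₐ[ℂ] B) B B
    (CStarAlgebra.toNonUnitalCStarAlgebra B) (CStarAlgebra.toNonUnitalCStarAlgebra B)
    inferInstance inferInstance inferInstance φ

/-- For an ergodic strongly continuous action `α` of a compact group `G`
on a unital C*-algebra `B` and a continuous length function `ℓ`, the quotient norm on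
`B/ℂ1` satisfies `‖T‖~ ≤ r·L(T)` with `r = ∫_G ℓ(x) dx` and
`L(T) = sup_{x ≠ e} ‖α_x T − T‖ / ℓ(x)`. -/
theorem stmt_14 {G : Type*} [Group G] [TopologicalSpace G] [IsTopologicalGroup G]
    [CompactSpace G] [MeasurableSpace G] [BorelSpace G]
    (μ : Measure G) [μ.IsHaarMeasure] [IsProbabilityMeasure μ]
    (ℓ : G → ℝ) (hℓcont : Continuous ℓ) (hℓ0 : ∀ x, 0 ≤ ℓ x)
    (hℓe : ∀ x, ℓ x = 0 ↔ x = 1) (hℓinv : ∀ x, ℓ x⁻¹ = ℓ x)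
    (hℓsub : ∀ x y, ℓ (x * y) ≤ ℓ x + ℓ y)
    {B : Type*} [NormedRing B] [StarRing B] [CStarRing B] [NormedAlgebra ℂ B]
    [StarModule ℂ B] [CompleteSpace B]
    (α : G → B ≃⋆ₐ[ℂ] B)
    (hhom : ∀ x y (b : B), α (x * y) b = α x (α y b))
    (hcont : ∀ b : B, Continuous fun x => α x b)
    (hergodic : ∀ b : B, (∀ x : G, α x b = b) → ∃ c : ℂ, b = c • (1 : B))
    (T : B) :
    ENNReal.ofReal (sInf (Set.range fun t : ℂ => ‖T + t • (1 : B)‖))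
      ≤ ENNReal.ofReal (∫ x, ℓ x ∂μ) *
          ⨆ x : {x : G // x ≠ 1}, ENNReal.ofReal (‖α x.1 T - T‖ / ℓ x.1) := by
  have hiso : ∀ y : G, Isometry (⇑(α y)) := fun y => aux_isometry (α y)
  have hα1 : ∀ b : B, α 1 b = b := by
    intro b
    have h := hhom 1 1 b
    rw [one_mul] at h
    exact ((α 1).injective h.symm)
  have hBdd : BddBelow (Set.range fun t : ℂ => ‖T + t • (1:B)‖) := by
    refine ⟨0, ?_⟩
    rintro y ⟨t, rfl⟩
    exact norm_nonneg _
  set S := ⨆ x : {x : G // x ≠ 1}, ENNReal.ofReal (‖α x.1 T - T‖ / ℓ x.1) with hS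
  set r := ∫ x, ℓ x ∂μ with hr
  have hℓint : Integrable ℓ μ :=
    hℓcont.integrable_of_hasCompactSupport (HasCompactSupport.of_compactSpace ℓ)
  have hr0 : 0 ≤ r := integral_nonneg hℓ0
  by_cases htop : ENNReal.ofReal r * S = ⊤
  · rw [htop]; exact le_top
  rcases eq_or_lt_of_le hr0 with hr0' | hrpos
  · -- r = 0 case
    have hℓz : ℓ = fun _ => (0 : ℝ) := by
      have h1 : ℓ =ᵐ[μ] (fun _ => (0:ℝ)) :=
        (integral_eq_zero_iff_of_nonneg hℓ0 hℓint).1 hr0'.symm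
      exact (Continuous.ae_eq_iff_eq μ hℓcont continuous_const).1 h1
    have hTinv : ∀ x : G, α x T = T := by
      intro x
      have hx1 : x = 1 := (hℓe x).1 (by rw [hℓz])
      rw [hx1, hα1]
    obtain ⟨c, hc⟩ := hergodic T hTinv
    have h0 : sInf (Set.range fun t : ℂ => ‖T + t • (1:B)‖) ≤ 0 := by
      have h1 : sInf (Set.range fun t : ℂ => ‖T + t • (1:B)‖) ≤ ‖T + (-c) • (1:B)‖ :=
        csInf_le hBdd ⟨-c, rfl⟩
      have : T + (-c) • (1:B) = 0 := by rw [hc, ← add_smul, add_neg_cancel, zero_smul]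
      rw [this, norm_zero] at h1
      exact h1
    rw [ENNReal.ofReal_eq_zero.2 h0]
    exact zero_le
  · -- r > 0
    have hSne : S ≠ ⊤ := by
      intro h
      apply htop
      rw [h, ENNReal.mul_top (by simpa using (ENNReal.ofReal_pos.2 hrpos).ne')]
    set Lr := S.toReal with hLr
    have hLr0 : 0 ≤ Lr := ENNReal.toReal_nonneg
    have hbound : ∀ x, ‖α x T - T‖ ≤ Lr * ℓ x := by
      intro x
      by_cases hx : x = 1
      · rw [hx, hα1, sub_self, norm_zero, (hℓe 1).2 rfl, mul_zero]
      · have hle : ENNReal.ofReal (‖α x T - T‖ / ℓ x) ≤ S :=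
          le_iSup (fun y : {x : G // x ≠ 1} => ENNReal.ofReal (‖α y.1 T - T‖ / ℓ y.1)) ⟨x, hx⟩
        have hdiv : ‖α x T - T‖ / ℓ x ≤ Lr := (ENNReal.ofReal_le_iff_le_toReal hSne).1 hle
        have hℓx : 0 < ℓ x := lt_of_le_of_ne (hℓ0 x) fun h => hx ((hℓe x).1 h.symm)
        calc ‖α x T - T‖ = (‖α x T - T‖ / ℓ x) * ℓ x := by field_simp
          _ ≤ Lr * ℓ x := mul_le_mul_of_nonneg_right hdiv (hℓ0 x)
    have hint : Integrable (fun x => α x T) μ :=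
      (hcont T).integrable_of_hasCompactSupport (HasCompactSupport.of_compactSpace _)
    set A := ∫ x, α x T ∂μ with hA
    have hΦ : ∀ y : G, ∃ Φ : B →L[ℂ] B, ∀ b, Φ b = α y b := by
      intro y
      refine ⟨⟨⟨⟨fun b => α y b, map_add (α y)⟩, map_smul (α y)⟩,
        (hiso y).continuous⟩, fun b => rfl⟩
    have hAinv : ∀ y : G, α y A = A := by
      intro y
      obtain ⟨Φ, hΦy⟩ := hΦ y
      have h1 : α y A = ∫ x, α y (α x T) ∂μ := by
        rw [← hΦy]
        rw [hA, ← ContinuousLinearMap.integral_comp_comm Φ hint]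
        simp_rw [hΦy]
      rw [h1]
      simp_rw [← hhom]
      exact integral_mul_left_eq_self (fun x => α x T) y
    obtain ⟨c, hc⟩ := hergodic A hAinv
    have hTc : ∫ x, (T - α x T) ∂μ = T - A := by
      rw [integral_sub (integrable_const T) hint, integral_const, probReal_univ,
        one_smul]
    have hTA : ‖T - A‖ ≤ Lr * r := by
      rw [← hTc]
      calc ‖∫ x, (T - α x T) ∂μ‖ ≤ ∫ x, ‖T - α x T‖ ∂μ :=
            norm_integral_le_integral_norm _
        _ ≤ ∫ x, Lr * ℓ x ∂μ := by
            refine integral_mono ((integrable_const T).sub hint).norm (hℓint.const_mul Lr) ?_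
            intro x
            show ‖T - α x T‖ ≤ Lr * ℓ x
            rw [norm_sub_rev]
            exact hbound x
        _ = Lr * r := by rw [integral_const_mul]
    have hmem : sInf (Set.range fun t : ℂ => ‖T + t • (1:B)‖) ≤ ‖T - A‖ := by
      have h1 : sInf (Set.range fun t : ℂ => ‖T + t • (1:B)‖) ≤ ‖T + (-c) • (1:B)‖ :=
        csInf_le hBdd ⟨-c, rfl⟩
      have : T + (-c) • (1:B) = T - A := by
        rw [hc, neg_smul, ← sub_eq_add_neg]
      rwa [this] at h1
    calc ENNReal.ofReal (sInf (Set.range fun t : ℂ => ‖T + t • (1:B)‖))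
        ≤ ENNReal.ofReal (Lr * r) := ENNReal.ofReal_le_ofReal (hmem.trans hTA)
      _ = ENNReal.ofReal Lr * ENNReal.ofReal r := ENNReal.ofReal_mul hLr0
      _ = ENNReal.ofReal r * S := by rw [ENNReal.ofReal_toReal hSne, mul_comm]
end

section
/- Let G be a connected compact semisimple Lie group, U an irreducible unitary representation on H with highest weight vector ξ of norm 1, and for each n let ξⁿ = ξ^{⊗n} ∈ H^{⊗n}. Let h_n(x) = d_n |⟨U_x^{⊗n} ξⁿ, ξⁿ⟩|² where d_n is a normalizing constant making ∫ h_n dx = 1. Then h_n(x) = d_n |⟨U_x ξ, ξ⟩|^{2n}, and the probability measures h_n(x)dx on G converge weak-* to the Dirac delta at the stability subgroup H₀ of P; that is, ∫_G f(x) h_n(x) dx → f(e) for every continuous function f on G/H₀ (viewed as an H₀-invariant function on G). -/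
open MeasureTheory Filter

/-- For an irreducible unitary representation `U` of a compact (Lie)
group with highest weight unit vector `ξ` and `g(x) = |⟨U_x ξ, ξ⟩|²`, the probability
measures with densities `gⁿ/‖gⁿ‖₁` (i.e. `h_n(x) = d_n |⟨U_x ξ, ξ⟩|^{2n}`, where `d_n` is
the normalizing constant) converge weak-* to the Dirac measure at the identity coset of
the stability subgroup `H₀` of `P`: for every continuous function `f` on `G` invariant
under right translation by `H₀ = {s : U_s ξ ∈ ℂξ}`, `∫ f h_n dμ → f(e)`. -/
theorem stmt_15 {G : Type*} [Group G] [TopologicalSpace G] [IsTopologicalGroup G]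
    [CompactSpace G] [T2Space G] [MeasurableSpace G] [BorelSpace G]
    (μ : Measure G) [μ.IsHaarMeasure] [IsProbabilityMeasure μ]
    {H : Type*} [NormedAddCommGroup H] [InnerProductSpace ℂ H] [FiniteDimensional ℂ H]
    (U : G →* (H ≃ₗᵢ[ℂ] H))
    (hcont : ∀ v : H, Continuous fun x => U x v)
    (hirr : ∀ p : Submodule ℂ H, (∀ (x : G), ∀ v ∈ p, U x v ∈ p) → p = ⊥ ∨ p = ⊤)
    (ξ : H) (hξ : ‖ξ‖ = 1)
    (f : G → ℝ) (hf : Continuous f)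
    (hinvf : ∀ x s : G, (∃ c : ℂ, U s ξ = c • ξ) → f (x * s) = f x) :
    Tendsto
      (fun n : ℕ =>
        (∫ x, f x * ‖(inner ℂ (U x ξ) ξ : ℂ)‖ ^ (2 * n) ∂μ) /
          ∫ x, ‖(inner ℂ (U x ξ) ξ : ℂ)‖ ^ (2 * n) ∂μ)
      atTop (nhds (f 1)) := by
  set g : G → ℝ := fun x => ‖(inner ℂ (U x ξ) ξ : ℂ)‖ with hgdef
  have hgc : Continuous g := ((hcont ξ).inner continuous_const).norm
  have hg0 : ∀ x, 0 ≤ g x := fun x => norm_nonneg _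
  have hg1 : ∀ x, g x ≤ 1 := by
    intro x
    calc g x ≤ ‖U x ξ‖ * ‖ξ‖ := norm_inner_le_norm _ _
    _ = 1 := by rw [(U x).norm_map, hξ]; ring
  have hge : g 1 = 1 := by
    simp only [hgdef, map_one]
    rw [show ((1 : H ≃ₗᵢ[ℂ] H) ξ) = ξ from rfl, inner_self_eq_norm_sq_to_K, hξ]
    norm_num
  have hξ0 : ξ ≠ 0 := fun h => by simp [h] at hξ
  have hstab : ∀ x, g x = 1 → ∃ c : ℂ, U x ξ = c • ξ := by
    intro x hx
    have hUξ0 : U x ξ ≠ 0 := by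
      intro h
      have := congrArg norm h
      rw [(U x).norm_map, hξ] at this
      simp at this
    obtain ⟨r, hr0, hr⟩ := (norm_inner_eq_norm_iff (𝕜 := ℂ) hUξ0 hξ0).1
      (by rw [(U x).norm_map, hξ]; simpa using hx)
    refine ⟨r⁻¹, ?_⟩
    conv_rhs => rw [hr]
    rw [smul_smul, inv_mul_cancel₀ hr0, one_smul]
  have hint : ∀ (φ : G → ℝ), Continuous φ → Integrable φ μ := fun φ hφ =>
    hφ.integrable_of_hasCompactSupport (HasCompactSupport.of_compactSpace φ)
  -- global bound on |f x - f 1|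
  obtain ⟨x₀, -, hCb⟩ := isCompact_univ.exists_isMaxOn Set.univ_nonempty
    ((hf.sub continuous_const).abs.continuousOn (s := (Set.univ : Set G)))
  set C : ℝ := |f x₀ - f 1| with hCdef
  have hC0 : 0 ≤ C := abs_nonneg _
  have hC : ∀ x, |f x - f 1| ≤ C := fun x => hCb (Set.mem_univ x)
  rw [Metric.tendsto_atTop]
  intro ε hε
  -- the bad set
  set A : Set G := {x | ε / 2 ≤ |f x - f 1|} with hAdef
  have hAc : IsClosed A := isClosed_le continuous_const (hf.sub continuous_const).abs
  have hAg : ∀ x ∈ A, g x < 1 := by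
    intro x hx
    refine lt_of_le_of_ne (hg1 x) fun h => ?_
    have h2 := hinvf 1 x (hstab x h)
    rw [one_mul] at h2
    have hx' : ε / 2 ≤ |f x - f 1| := hx
    rw [h2] at hx'
    simp at hx'
    linarith
  -- the sup of g on A
  obtain ⟨m, hm1, hm0, hmA⟩ : ∃ m : ℝ, m < 1 ∧ 0 ≤ m ∧ ∀ x ∈ A, g x ≤ m := by
    rcases A.eq_empty_or_nonempty with h | h
    · exact ⟨0, one_pos, le_refl 0, by simp [h]⟩
    · obtain ⟨y, hyA, hy⟩ := hAc.isCompact.exists_isMaxOn h hgc.continuousOn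
      exact ⟨max (g y) 0, max_lt (hAg y hyA) one_pos, le_max_right _ _,
        fun z hz => le_max_of_le_left (hy hz)⟩
  set t : ℝ := (m + 1) / 2 with htdef
  have hmt : m < t := by rw [htdef]; linarith
  have ht1 : t < 1 := by rw [htdef]; linarith
  have ht0 : 0 < t := by rw [htdef]; linarith
  -- the good open set
  set S : Set G := {x | t < g x} with hSdef
  have hSo : IsOpen S := isOpen_lt continuous_const hgc
  have hSne : S.Nonempty := ⟨1, by simp only [hSdef, Set.mem_setOf_eq, hge]; exact ht1⟩
  set c : ℝ := (μ S).toReal with hcdef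
  have hc : 0 < c :=
    ENNReal.toReal_pos (hSo.measure_pos μ hSne).ne' (measure_ne_top μ S)
  clear_value t c
  have hgint : ∀ n : ℕ, Integrable (fun x => g x ^ (2 * n)) μ :=
    fun n => hint _ (hgc.pow _)
  -- lower bound for the denominator
  have hDlb : ∀ n : ℕ, t ^ (2 * n) * c ≤ ∫ x, g x ^ (2 * n) ∂μ := by
    intro n
    have h1 : ∫ _x in S, t ^ (2 * n) ∂μ ≤ ∫ x in S, g x ^ (2 * n) ∂μ := by
      refine setIntegral_mono_on (integrableOn_const (measure_ne_top μ S))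
        ((hgint n).integrableOn) hSo.measurableSet fun x hx => ?_
      exact pow_le_pow_left₀ ht0.le (le_of_lt hx) _
    have h2 : ∫ x in S, g x ^ (2 * n) ∂μ ≤ ∫ x, g x ^ (2 * n) ∂μ :=
      setIntegral_le_integral (hgint n) (ae_of_all _ fun x => pow_nonneg (hg0 x) _)
    rw [setIntegral_const, smul_eq_mul, mul_comm, measureReal_def] at h1
    rw [hcdef]
    linarith
  have hDpos : ∀ n : ℕ, 0 < ∫ x, g x ^ (2 * n) ∂μ :=
    fun n => lt_of_lt_of_le (by positivity) (hDlb n)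
  -- numerator bound
  have hnum : ∀ n : ℕ,
      |(∫ x, f x * g x ^ (2 * n) ∂μ) - f 1 * ∫ x, g x ^ (2 * n) ∂μ|
        ≤ (ε / 2) * (∫ x, g x ^ (2 * n) ∂μ) + C * m ^ (2 * n) := by
    intro n
    have hInt1 : Integrable (fun x => (f x - f 1) * g x ^ (2 * n)) μ :=
      hint _ ((hf.sub continuous_const).mul (hgc.pow _))
    have hIntAbs : Integrable (fun x => |f x - f 1| * g x ^ (2 * n)) μ :=
      hint _ ((hf.sub continuous_const).abs.mul (hgc.pow _))
    have e1 : (∫ x, f x * g x ^ (2 * n) ∂μ) - f 1 * ∫ x, g x ^ (2 * n) ∂μ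
        = ∫ x, (f x - f 1) * g x ^ (2 * n) ∂μ := by
      rw [← integral_const_mul, ← integral_sub (hint (fun x => f x * g x ^ (2 * n)) (hf.mul (hgc.pow _)))
        (hint (fun x => f 1 * g x ^ (2 * n)) (continuous_const.mul (hgc.pow _)))]
      simp only [sub_mul]
    rw [e1]
    have e2 : |∫ x, (f x - f 1) * g x ^ (2 * n) ∂μ|
        ≤ ∫ x, |f x - f 1| * g x ^ (2 * n) ∂μ := by
      have := norm_integral_le_integral_norm (μ := μ)
        (f := fun x => (f x - f 1) * g x ^ (2 * n))
      simpa [hgdef, abs_mul, abs_norm] using this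
    refine e2.trans ?_
    have hsplit : ∫ x, |f x - f 1| * g x ^ (2 * n) ∂μ
        = (∫ x in A, |f x - f 1| * g x ^ (2 * n) ∂μ)
          + ∫ x in Aᶜ, |f x - f 1| * g x ^ (2 * n) ∂μ :=
      (integral_add_compl hAc.measurableSet hIntAbs).symm
    have hA_bound : ∫ x in A, |f x - f 1| * g x ^ (2 * n) ∂μ ≤ C * m ^ (2 * n) := by
      have h1 : ∫ x in A, |f x - f 1| * g x ^ (2 * n) ∂μ
          ≤ ∫ _x in A, C * m ^ (2 * n) ∂μ := by
        refine setIntegral_mono_on hIntAbs.integrableOn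
          (integrableOn_const (measure_ne_top μ A))
          hAc.measurableSet fun x hx => ?_
        exact mul_le_mul (hC x) (pow_le_pow_left₀ (hg0 x) (hmA x hx) _)
          (pow_nonneg (hg0 x) _) hC0
      rw [setIntegral_const, smul_eq_mul, measureReal_def] at h1
      refine h1.trans ?_
      have hμA : (μ A).toReal ≤ 1 := by
        simpa using ENNReal.toReal_mono ENNReal.one_ne_top (prob_le_one (μ := μ) (s := A))
      nlinarith [mul_nonneg (sub_nonneg.2 hμA)
        (mul_nonneg hC0 (pow_nonneg hm0 (2 * n)))]
    have hAc_bound : ∫ x in Aᶜ, |f x - f 1| * g x ^ (2 * n) ∂μ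
        ≤ (ε / 2) * ∫ x, g x ^ (2 * n) ∂μ := by
      have h1 : ∫ x in Aᶜ, |f x - f 1| * g x ^ (2 * n) ∂μ
          ≤ ∫ x in Aᶜ, (ε / 2) * g x ^ (2 * n) ∂μ := by
        refine setIntegral_mono_on hIntAbs.integrableOn
          ((hint _ (continuous_const.mul (hgc.pow _))).integrableOn)
          hAc.measurableSet.compl fun x hx => ?_
        have : |f x - f 1| < ε / 2 := not_le.1 hx
        exact mul_le_mul_of_nonneg_right this.le (pow_nonneg (hg0 x) _)
      refine h1.trans ?_
      rw [integral_const_mul]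
      refine mul_le_mul_of_nonneg_left ?_ (half_pos hε).le
      exact setIntegral_le_integral (hgint n) (ae_of_all _ fun x => pow_nonneg (hg0 x) _)
    rw [hsplit]
    linarith
  -- the error sequence
  have hr1 : (m / t) ^ 2 < 1 := by
    have : m / t < 1 := (div_lt_one ht0).2 hmt
    nlinarith [div_nonneg hm0 ht0.le]
  have htend : Tendsto (fun n : ℕ => C / c * ((m / t) ^ 2) ^ n) atTop (nhds 0) := by
    simpa using
      (tendsto_pow_atTop_nhds_zero_of_lt_one (by positivity) hr1).const_mul (C / c)
  have hev : ∀ᶠ n : ℕ in atTop, C / c * ((m / t) ^ 2) ^ n < ε / 2 :=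
    htend.eventually (Filter.Tendsto.eventually_lt_const (half_pos hε) tendsto_id) |>.mono fun n h => h
  rw [eventually_atTop] at hev
  obtain ⟨N, hN⟩ := hev
  refine ⟨N, fun n hn => ?_⟩
  have hD := hDpos n
  have key : |(∫ x, f x * g x ^ (2 * n) ∂μ) / (∫ x, g x ^ (2 * n) ∂μ) - f 1|
      ≤ ε / 2 + C / c * ((m / t) ^ 2) ^ n := by
    have h1 : (∫ x, f x * g x ^ (2 * n) ∂μ) / (∫ x, g x ^ (2 * n) ∂μ) - f 1
        = ((∫ x, f x * g x ^ (2 * n) ∂μ) - f 1 * ∫ x, g x ^ (2 * n) ∂μ)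
          / ∫ x, g x ^ (2 * n) ∂μ := by
      field_simp
    rw [h1, abs_div, abs_of_pos hD]
    have h2 : |(∫ x, f x * g x ^ (2 * n) ∂μ) - f 1 * ∫ x, g x ^ (2 * n) ∂μ|
          / (∫ x, g x ^ (2 * n) ∂μ)
        ≤ ((ε / 2) * (∫ x, g x ^ (2 * n) ∂μ) + C * m ^ (2 * n))
          / (∫ x, g x ^ (2 * n) ∂μ) :=
      div_le_div_of_nonneg_right (hnum n) hD.le
    refine h2.trans ?_
    rw [add_div]
    have h3 : (ε / 2) * (∫ x, g x ^ (2 * n) ∂μ) / (∫ x, g x ^ (2 * n) ∂μ) = ε / 2 := by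
      field_simp
    rw [h3]
    have h4 : C * m ^ (2 * n) / (∫ x, g x ^ (2 * n) ∂μ)
        ≤ C * m ^ (2 * n) / (t ^ (2 * n) * c) := by
      apply div_le_div_of_nonneg_left (mul_nonneg hC0 (pow_nonneg hm0 _))
        (by positivity) (hDlb n)
    have h5 : C * m ^ (2 * n) / (t ^ (2 * n) * c) = C / c * ((m / t) ^ 2) ^ n := by
      rw [← pow_mul, div_pow, div_mul_div_comm, mul_comm c (t ^ (2 * n))]
    linarith
  rw [Real.dist_eq]
  have := hN n hn
  linarith
end

section
/- Let A and B be order-unit spaces (or unital C*-algebras) with Lip-norms L_A and L_B, let σ : B → A be a positive unital linear map, and let γ > 0. Define L on A ⊕ B by L(f,T) = max(L_A(f), L_B(T), γ⁻¹‖f − σ(T)‖). Suppose the quotient of L on A equals L_A. Then for every state μ of A, the state ν = μ ∘ σ of B satisfies ρ_L(μ, ν) ≤ γ, where ρ_L(μ,ν) = sup{|μ(f) − ν(T)| : L(f,T) ≤ 1}. Hence S(A) lies in the γ-neighborhood of S(B) for the metric ρ_L. -/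
/-- A positive unital linear functional on a unital C*-algebra is norm-contractive. -/
lemma pos_unital_functional_norm_le {A : Type*} [NormedRing A] [StarRing A] [CStarRing A]
    [NormedAlgebra ℂ A] [StarModule ℂ A] [CompleteSpace A]
    (μ : A →ₗ[ℂ] ℂ) (hμ1 : μ 1 = 1)
    (hμpos : ∀ a : A, 0 ≤ (μ (star a * a)).re ∧ (μ (star a * a)).im = 0)
    (d : A) : ‖μ d‖ ≤ ‖d‖ := by
  letI : CStarAlgebra A := {}
  letI := CStarAlgebra.spectralOrder A
  haveI := CStarAlgebra.spectralOrderedRing A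
  -- values on nonnegative elements
  have hnn : ∀ x : A, 0 ≤ x → 0 ≤ (μ x).re ∧ (μ x).im = 0 := by
    intro x hx
    have h1 : CFC.sqrt x * CFC.sqrt x = x := CFC.sqrt_mul_sqrt_self x hx
    have h2 : IsSelfAdjoint (CFC.sqrt x) := IsSelfAdjoint.of_nonneg (CFC.sqrt_nonneg x)
    have h3 := hμpos (CFC.sqrt x)
    rwa [h2.star_eq, h1] at h3
  have halg : ∀ r : ℝ, μ (algebraMap ℝ A r) = (r : ℂ) := by
    intro r
    have : algebraMap ℝ A r = (r : ℂ) • (1 : A) := by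
      rw [IsScalarTower.algebraMap_apply ℝ ℂ A, Algebra.algebraMap_eq_smul_one,
        Complex.coe_algebraMap]
    rw [this, map_smul, hμ1, smul_eq_mul, mul_one]
  -- values on selfadjoint elements
  have hsa : ∀ s : A, IsSelfAdjoint s → (μ s).im = 0 ∧ (μ s).re ≤ ‖s‖ := by
    intro s hs
    have h1 : 0 ≤ algebraMap ℝ A ‖s‖ - s := sub_nonneg.mpr hs.le_algebraMap_norm_self
    have h2 := hnn _ h1
    rw [map_sub, halg] at h2
    obtain ⟨h2a, h2b⟩ := h2
    constructor
    · simpa [Complex.sub_im] using h2b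
    · simp only [Complex.sub_re, Complex.ofReal_re] at h2a; linarith
  -- main argument
  rcases eq_or_ne (μ d) 0 with h | h
  · simp [h]
  set c := μ d with hc
  have hcn : (‖c‖ : ℂ) ≠ 0 := by
    simpa using norm_ne_zero_iff.mpr h
  set u : ℂ := star c / (‖c‖ : ℂ) with hu
  set e : A := u • d with he
  have hue : μ e = (‖c‖ : ℂ) := by
    rw [he, map_smul, smul_eq_mul, ← hc, hu, div_mul_eq_mul_div]
    rw [show star c * c = ((‖c‖ : ℂ)) * (‖c‖ : ℂ) by
      rw [Complex.star_def, ← Complex.normSq_eq_conj_mul_self]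
      simp [Complex.normSq_eq_norm_sq, pow_two]]
    field_simp
  have hunorm : ‖u‖ = 1 := by
    rw [hu, norm_div, norm_star]
    rw [Complex.norm_real, Real.norm_eq_abs, abs_of_nonneg (norm_nonneg c)]
    exact div_self (norm_ne_zero_iff.mpr h)
  have henorm : ‖e‖ = ‖d‖ := by
    rw [he, norm_smul, hunorm, one_mul]
  set s : A := (2 : ℂ)⁻¹ • (e + star e) with hs
  set t : A := (2 * Complex.I)⁻¹ • (e - star e) with ht
  have hss : IsSelfAdjoint s := by
    rw [IsSelfAdjoint, hs, star_smul, star_add, star_star]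
    rw [show star ((2 : ℂ)⁻¹) = (2 : ℂ)⁻¹ by simp [Complex.star_def]]
    rw [add_comm]
  have hts : IsSelfAdjoint t := by
    rw [IsSelfAdjoint, ht, star_smul, star_sub, star_star]
    rw [show star ((2 * Complex.I)⁻¹) = -(2 * Complex.I)⁻¹ by
      simp [Complex.star_def, map_inv₀, Complex.conj_I, mul_comm]]
    rw [neg_smul, ← smul_neg, neg_sub]
  have hest : e = s + Complex.I • t := by
    rw [hs, ht, smul_smul]
    rw [show Complex.I * (2 * Complex.I)⁻¹ = (2 : ℂ)⁻¹ by
      field_simp [Complex.I_ne_zero]]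
    rw [smul_add, smul_sub, ← add_sub_assoc]
    rw [show (2:ℂ)⁻¹ • e + (2:ℂ)⁻¹ • star e + (2:ℂ)⁻¹ • e - (2:ℂ)⁻¹ • star e
        = ((2:ℂ)⁻¹ + (2:ℂ)⁻¹) • e by module]
    norm_num
  have hmue : μ e = μ s + Complex.I * μ t := by
    rw [hest]
    simp only [map_add, map_smul, smul_eq_mul]
  obtain ⟨hsim, hsre⟩ := hsa s hss
  obtain ⟨htim, _⟩ := hsa t hts
  have hre : ‖c‖ = (μ s).re := by
    have := congrArg Complex.re hmue
    rw [hue] at this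
    simp only [Complex.ofReal_re, Complex.add_re, Complex.mul_re, Complex.I_re,
      Complex.I_im, htim] at this
    simpa using this
  have hsnorm : ‖s‖ ≤ ‖d‖ := by
    calc ‖s‖ = ‖(2:ℂ)⁻¹‖ * ‖e + star e‖ := by rw [hs, norm_smul]
      _ ≤ 2⁻¹ * (‖e‖ + ‖star e‖) := by
          rw [show ‖(2:ℂ)⁻¹‖ = 2⁻¹ by simp]
          gcongr
          exact norm_add_le _ _
      _ = ‖e‖ := by rw [norm_star]; ring
      _ = ‖d‖ := henorm
  calc ‖μ d‖ = ‖c‖ := rfl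
    _ = (μ s).re := hre
    _ ≤ ‖s‖ := hsre
    _ ≤ ‖d‖ := hsnorm

/-- Let `σ : B → A` be a positive unital linear map between unital
C*-algebras carrying Lip-norms `L_A`, `L_B`, let `γ > 0`, and let
`L(f,T) = max(L_A f, L_B T, γ⁻¹‖f − σ T‖)` be the bridge seminorm; assume the quotient of
`L` on `A` is `L_A`. Then for every state `μ` of `A`, the state `ν = μ ∘ σ` of `B`
satisfies `ρ_L(μ,ν) ≤ γ`: whenever `L(f,T) ≤ 1`, `|μ(f) − ν(T)| ≤ γ`. Hence `S(A)` lies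
in the `γ`-neighborhood of `S(B)`. -/
theorem stmt_17 {A : Type*} [NormedRing A] [StarRing A] [CStarRing A] [NormedAlgebra ℂ A]
    [StarModule ℂ A] [CompleteSpace A]
    {B : Type*} [NormedRing B] [StarRing B] [CStarRing B] [NormedAlgebra ℂ B]
    [StarModule ℂ B] [CompleteSpace B]
    (LA : A → ℝ) (LB : B → ℝ)
    (σ : B →ₗ[ℂ] A) (hσ1 : σ 1 = 1)
    (hσpos : ∀ b : B, (∃ c : B, b = star c * c) → ∃ a : A, σ b = star a * a)
    (γ : ℝ) (hγ : 0 < γ)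
    (hquot : ∀ f : A,
      sInf (Set.range fun T : B => max (LA f) (max (LB T) (γ⁻¹ * ‖f - σ T‖))) = LA f)
    (μ : A →ₗ[ℂ] ℂ) (hμ1 : μ 1 = 1)
    (hμpos : ∀ a : A, 0 ≤ (μ (star a * a)).re ∧ (μ (star a * a)).im = 0)
    (f : A) (T : B)
    (hLT : max (LA f) (max (LB T) (γ⁻¹ * ‖f - σ T‖)) ≤ 1) :
    ‖μ f - μ (σ T)‖ ≤ γ := by
  have h3 : γ⁻¹ * ‖f - σ T‖ ≤ 1 :=
    le_trans (le_trans (le_max_right _ _) (le_max_right _ _)) hLT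
  have h4 : ‖f - σ T‖ ≤ γ := by
    have hγγ := mul_inv_cancel₀ (ne_of_gt hγ)
    nlinarith [norm_nonneg (f - σ T)]
  calc ‖μ f - μ (σ T)‖ = ‖μ (f - σ T)‖ := by rw [map_sub]
    _ ≤ ‖f - σ T‖ := pos_unital_functional_norm_le μ hμ1 hμpos _
    _ ≤ γ := h4
end

section
/- Let k ≥ 1 and let X₁,...,X_k be operators on H with ‖X_j‖ ≤ K and let ξ be a unit vector. For n > k, consider T_n = n^{−k}⟨U^{(n)}_{X_1}···U^{(n)}_{X_k} ξ^{⊗n}, ξ^{⊗n}⟩ where U^{(n)}_X = Σ_{i=1}^n 1⊗···⊗X⊗···⊗1. Then |T_n − Π_{j=1}^k ⟨X_j ξ, ξ⟩| ≤ n^{−k}·2·p(n)·max(1,K)^k, where p(n) = n^k − n(n−1)···(n−k+1) is a polynomial in n of degree k−1. In particular T_n → Π_j ⟨X_j ξ, ξ⟩ as n → ∞. -/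
open Filter

/-- The matrix of `U^{(n)}_X = Σ_{i=1}^n 1⊗···⊗X⊗···⊗1` on the `n`-fold tensor power,
realized on the function basis indexed by `Fin n → ι`. -/
noncomputable def slotSum {ι : Type*} [Fintype ι] [DecidableEq ι]
    (M : Matrix ι ι ℂ) (n : ℕ) : Matrix (Fin n → ι) (Fin n → ι) ℂ :=
  fun p q => ∑ k : Fin n,
    M (p k) (q k) * ∏ j ∈ Finset.univ.erase k, (if p j = q j then (1 : ℂ) else 0)

/-- The `n`-fold elementary tensor `v^{⊗n}`, realized in the function model. -/
noncomputable def tensorVec {ι : Type*} [Fintype ι] (v : EuclideanSpace ℂ ι) (n : ℕ) :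
    EuclideanSpace ℂ (Fin n → ι) :=
  (WithLp.equiv 2 ((Fin n → ι) → ℂ)).symm fun p => ∏ k, v (p k)

/-- `T_n = n^{−k} ⟨U^{(n)}_{X_1} ⋯ U^{(n)}_{X_k} ξ^{⊗n}, ξ^{⊗n}⟩`. -/
noncomputable def Tseq {ι : Type*} [Fintype ι] [DecidableEq ι] {k : ℕ}
    (M : Fin k → Matrix ι ι ℂ) (v : EuclideanSpace ℂ ι) (n : ℕ) : ℂ :=
  (n : ℂ) ^ (-(k : ℤ)) *
    inner ℂ ((List.ofFn fun j => Matrix.toEuclideanCLM (𝕜 := ℂ) (slotSum (M j) n)).prod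
      (tensorVec v n)) (tensorVec v n)

section Aux

lemma Matrix.toEuclideanCLM_piLp_equiv_symm {n : Type*} [Fintype n] [DecidableEq n]
    (A : Matrix n n ℂ) (x : n → ℂ) :
    Matrix.toEuclideanCLM (n := n) (𝕜 := ℂ) A ((WithLp.equiv 2 _).symm x)
      = (WithLp.equiv 2 _).symm (Matrix.toLin' A x) := rfl

@[simp] lemma WithLp.equiv_symm_pi_apply {ι' : Type*} [Fintype ι'] (f : ι' → ℂ) (i : ι') :
    (WithLp.equiv 2 (ι' → ℂ)).symm f i = f i := rfl

open Finset Matrix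
variable {ι : Type*} [Fintype ι] [DecidableEq ι] {n : ℕ}

noncomputable def slotMat (M : Matrix ι ι ℂ) (i : Fin n) :
    Matrix (Fin n → ι) (Fin n → ι) ℂ :=
  fun p q => M (p i) (q i) * ∏ j ∈ Finset.univ.erase i, (if p j = q j then (1:ℂ) else 0)

lemma slotSum_eq (M : Matrix ι ι ℂ) (n : ℕ) : slotSum M n = ∑ i : Fin n, slotMat M i := by
  ext p q; simp [slotSum, slotMat, Matrix.sum_apply]

lemma slotMat_mulVec_apply (M : Matrix ι ι ℂ) (i : Fin n) (y : (Fin n → ι) → ℂ)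
    (p : Fin n → ι) :
    (slotMat M i *ᵥ y) p = ∑ a, M (p i) a * y (Function.update p i a) := by
  have hsub : (Finset.univ.image fun a : ι => Function.update p i a) ⊆ Finset.univ :=
    Finset.subset_univ _
  rw [Matrix.mulVec, dotProduct]
  rw [← Finset.sum_subset hsub]
  · rw [Finset.sum_image (fun a _ b _ h => Function.update_injective p i h)]
    refine Finset.sum_congr rfl fun a _ => ?_
    simp only [slotMat, Function.update_self]
    have : ∀ j ∈ Finset.univ.erase i, (if p j = Function.update p i a j then (1:ℂ) else 0) = 1 := by
      intro j hj
      rw [Function.update_of_ne (Finset.ne_of_mem_erase hj)]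
      simp
    rw [Finset.prod_congr rfl this]
    simp
  · intro q _ hq
    have : ¬ (∀ j, j ≠ i → p j = q j) := by
      intro h
      apply hq
      refine Finset.mem_image.2 ⟨q i, Finset.mem_univ _, ?_⟩
      funext j
      by_cases hji : j = i
      · subst hji; simp
      · rw [Function.update_of_ne hji]; exact h j hji
    simp only [slotMat]
    push_neg at this
    obtain ⟨j, hji, hpq⟩ := this
    have hz : (∏ j ∈ Finset.univ.erase i, if p j = q j then (1:ℂ) else 0) = 0 :=
      Finset.prod_eq_zero (Finset.mem_erase.2 ⟨hji, Finset.mem_univ _⟩) (if_neg hpq)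
    rw [hz]
    ring

lemma slotMat_mulVec_tensor (M : Matrix ι ι ℂ) (i : Fin n) (w : Fin n → ι → ℂ) :
    (slotMat M i *ᵥ fun p => ∏ k, w k (p k)) =
      fun p => ∏ k, Function.update w i (M *ᵥ w i) k (p k) := by
  funext p
  rw [slotMat_mulVec_apply]
  rw [← Finset.mul_prod_erase Finset.univ _ (Finset.mem_univ i)]
  have hR : ∀ j ∈ Finset.univ.erase i, Function.update w i (M *ᵥ w i) j (p j) = w j (p j) := by
    intro j hj
    rw [Function.update_of_ne (Finset.ne_of_mem_erase hj)]
  rw [Finset.prod_congr rfl hR, Function.update_self]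
  rw [Matrix.mulVec, dotProduct, Finset.sum_mul]
  refine Finset.sum_congr rfl fun a _ => ?_
  rw [← Finset.mul_prod_erase Finset.univ _ (Finset.mem_univ i), Function.update_self]
  have hR2 : ∀ j ∈ Finset.univ.erase i, w j (Function.update p i a j) = w j (p j) := by
    intro j hj
    rw [Function.update_of_ne (Finset.ne_of_mem_erase hj)]
  rw [Finset.prod_congr rfl hR2]
  ring

/-- splitting equiv -/
def splitAt (i : Fin n) : (Fin n → ι) ≃ ι × ({j : Fin n // j ≠ i} → ι) where
  toFun p := (p i, fun j => p j.1)
  invFun x j := if h : j = i then x.1 else x.2 ⟨j, h⟩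
  left_inv p := by
    funext j
    by_cases h : j = i
    · subst h; exact dif_pos rfl
    · exact dif_neg h
  right_inv x := by
    refine Prod.ext (dif_pos rfl) ?_
    funext j
    exact dif_neg j.2

lemma splitAt_symm_apply_self (i : Fin n) (a : ι) (r : {j : Fin n // j ≠ i} → ι) :
    (splitAt i).symm (a, r) i = a := dif_pos rfl

lemma splitAt_symm_apply_ne (i : Fin n) (a : ι) (r : {j : Fin n // j ≠ i} → ι)
    {j : Fin n} (h : j ≠ i) : (splitAt i).symm (a, r) j = r ⟨j, h⟩ := dif_neg h

lemma update_splitAt_symm (i : Fin n) (a b : ι) (r : {j : Fin n // j ≠ i} → ι) :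
    Function.update ((splitAt i).symm (a, r)) i b = (splitAt i).symm (b, r) := by
  funext j
  by_cases h : j = i
  · subst h; rw [Function.update_self, splitAt_symm_apply_self]
  · rw [Function.update_of_ne h, splitAt_symm_apply_ne i a r h, splitAt_symm_apply_ne i b r h]

lemma sq_sum_mulVec_le (M : Matrix ι ι ℂ) (z : ι → ℂ) :
    ∑ a, ‖(M *ᵥ z) a‖ ^ 2 ≤ ‖Matrix.toEuclideanCLM (𝕜 := ℂ) M‖ ^ 2 * ∑ a, ‖z a‖ ^ 2 := by
  have h := (Matrix.toEuclideanCLM (𝕜 := ℂ) M).le_opNorm ((WithLp.equiv 2 (ι → ℂ)).symm z)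
  rw [Matrix.toEuclideanCLM_piLp_equiv_symm] at h
  have e1 : ‖(WithLp.equiv 2 (ι → ℂ)).symm (Matrix.toLin' M z)‖
      = Real.sqrt (∑ a, ‖(M *ᵥ z) a‖ ^ 2) := by
    simp [EuclideanSpace.norm_eq, Matrix.toLin'_apply]
  have e2 : ‖(WithLp.equiv 2 (ι → ℂ)).symm z‖ = Real.sqrt (∑ a, ‖z a‖ ^ 2) := by
    simp [EuclideanSpace.norm_eq]
  rw [e1, e2] at h
  have h1 : (0:ℝ) ≤ ∑ a, ‖(M *ᵥ z) a‖ ^ 2 := Finset.sum_nonneg fun a _ => sq_nonneg _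
  have h2 : (0:ℝ) ≤ ∑ a, ‖z a‖ ^ 2 := Finset.sum_nonneg fun a _ => sq_nonneg _
  calc ∑ a, ‖(M *ᵥ z) a‖ ^ 2 = Real.sqrt (∑ a, ‖(M *ᵥ z) a‖ ^ 2) ^ 2 := (Real.sq_sqrt h1).symm
    _ ≤ (‖Matrix.toEuclideanCLM (𝕜 := ℂ) M‖ * Real.sqrt (∑ a, ‖z a‖ ^ 2)) ^ 2 := by
        have := Real.sqrt_nonneg (∑ a, ‖(M *ᵥ z) a‖ ^ 2)
        exact pow_le_pow_left₀ this h 2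
    _ = ‖Matrix.toEuclideanCLM (𝕜 := ℂ) M‖ ^ 2 * ∑ a, ‖z a‖ ^ 2 := by
        rw [mul_pow, Real.sq_sqrt h2]

lemma norm_slotMat_le (M : Matrix ι ι ℂ) (i : Fin n) :
    ‖Matrix.toEuclideanCLM (𝕜 := ℂ) (slotMat M i)‖ ≤ ‖Matrix.toEuclideanCLM (𝕜 := ℂ) M‖ := by
  refine ContinuousLinearMap.opNorm_le_bound _ (norm_nonneg _) fun x => ?_
  set C := ‖Matrix.toEuclideanCLM (𝕜 := ℂ) M‖ with hC
  set y : (Fin n → ι) → ℂ := WithLp.equiv 2 ((Fin n → ι) → ℂ) x with hy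
  have hx : x = (WithLp.equiv 2 ((Fin n → ι) → ℂ)).symm y := by simp [hy]
  rw [hx, Matrix.toEuclideanCLM_piLp_equiv_symm]
  rw [EuclideanSpace.norm_eq, EuclideanSpace.norm_eq]
  have key : ∑ p, ‖((WithLp.equiv 2 ((Fin n → ι) → ℂ)).symm (Matrix.toLin' (slotMat M i) y)) p‖ ^ 2
      ≤ C ^ 2 * ∑ p, ‖((WithLp.equiv 2 ((Fin n → ι) → ℂ)).symm y) p‖ ^ 2 := by
    simp only [WithLp.equiv_symm_pi_apply, Matrix.toLin'_apply]
    have hsplit : ∀ (g : (Fin n → ι) → ℝ),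
        ∑ p, g p = ∑ r : {j : Fin n // j ≠ i} → ι, ∑ a : ι, g ((splitAt i).symm (a, r)) := by
      intro g
      rw [← Equiv.sum_comp (splitAt i).symm g, Fintype.sum_prod_type, Finset.sum_comm]
    rw [hsplit, hsplit (fun p => ‖y p‖ ^ 2), Finset.mul_sum]
    refine Finset.sum_le_sum fun r _ => ?_
    set z : ι → ℂ := fun b => y ((splitAt i).symm (b, r)) with hz
    have hAz : ∀ a : ι, (slotMat M i *ᵥ y) ((splitAt i).symm (a, r)) = (M *ᵥ z) a := by
      intro a
      rw [slotMat_mulVec_apply]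
      rw [Matrix.mulVec, dotProduct]
      refine Finset.sum_congr rfl fun b _ => ?_
      rw [splitAt_symm_apply_self, update_splitAt_symm]
    calc ∑ a : ι, ‖(slotMat M i *ᵥ y) ((splitAt i).symm (a, r))‖ ^ 2
        = ∑ a : ι, ‖(M *ᵥ z) a‖ ^ 2 := by
          refine Finset.sum_congr rfl fun a _ => ?_; rw [hAz]
      _ ≤ C ^ 2 * ∑ a, ‖z a‖ ^ 2 := sq_sum_mulVec_le M z
  have hCpos : 0 ≤ C := norm_nonneg _
  calc Real.sqrt (∑ p, ‖((WithLp.equiv 2 ((Fin n → ι) → ℂ)).symm (Matrix.toLin' (slotMat M i) y)) p‖ ^ 2)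
      ≤ Real.sqrt (C ^ 2 * ∑ p, ‖((WithLp.equiv 2 ((Fin n → ι) → ℂ)).symm y) p‖ ^ 2) :=
        Real.sqrt_le_sqrt key
    _ = C * Real.sqrt (∑ p, ‖((WithLp.equiv 2 ((Fin n → ι) → ℂ)).symm y) p‖ ^ 2) := by
        rw [Real.sqrt_mul (sq_nonneg C), Real.sqrt_sq hCpos]

noncomputable def tensorF (w : Fin n → ι → ℂ) : EuclideanSpace ℂ (Fin n → ι) :=
  (WithLp.equiv 2 ((Fin n → ι) → ℂ)).symm fun p => ∏ k, w k (p k)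

lemma inner_tensorF (w u : Fin n → ι → ℂ) :
    (inner ℂ (tensorF w) (tensorF u) : ℂ) = ∏ k, ∑ a, starRingEnd ℂ (w k a) * u k a := by
  rw [Fintype.prod_sum fun k a => starRingEnd ℂ (w k a) * u k a]
  rw [PiLp.inner_apply]
  refine Finset.sum_congr rfl fun p _ => ?_
  simp only [tensorF, WithLp.equiv_symm_pi_apply, RCLike.inner_apply, map_prod,
    Finset.prod_mul_distrib]
  exact mul_comm _ _

lemma list_prod_sum {R : Type*} [Semiring R] {I : Type*} [Fintype I] [DecidableEq I] :
    ∀ (k : ℕ) (m : Fin k → I → R),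
    (List.ofFn fun j => ∑ i, m j i).prod = ∑ f : Fin k → I, (List.ofFn fun j => m j (f j)).prod
  | 0, m => by
    simp only [List.ofFn_zero, List.prod_nil]
    simp [Finset.sum_const, Finset.card_univ]
  | (k+1), m => by
    rw [List.ofFn_succ, List.prod_cons, list_prod_sum k (fun j i => m j.succ i)]
    rw [← Equiv.sum_comp (Fin.consEquiv fun _ : Fin (k+1) => I)
      (fun f => (List.ofFn fun j => m j (f j)).prod), Fintype.sum_prod_type]
    rw [Finset.sum_mul]
    refine Finset.sum_congr rfl fun i _ => ?_
    rw [Finset.mul_sum]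
    refine Finset.sum_congr rfl fun g _ => ?_
    have : (Fin.consEquiv fun _ : Fin (k+1) => I) (i, g) = Fin.cons i g := rfl
    rw [this, List.ofFn_succ, List.prod_cons, Fin.cons_zero]
    congr 1

noncomputable def updSeq (L : List (Matrix ι ι ℂ × Fin n)) (w : Fin n → ι → ℂ) :
    Fin n → ι → ℂ :=
  L.foldr (fun Xi w => Function.update w Xi.2 (Xi.1 *ᵥ w Xi.2)) w

lemma prod_slot_apply (L : List (Matrix ι ι ℂ × Fin n)) (w : Fin n → ι → ℂ) :
    (L.map fun Xi => Matrix.toEuclideanCLM (𝕜 := ℂ) (slotMat Xi.1 Xi.2)).prod (tensorF w)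
      = tensorF (updSeq L w) := by
  induction L with
  | nil => simp [updSeq]
  | cons Xi L ih =>
    rw [List.map_cons, List.prod_cons, ContinuousLinearMap.mul_apply, ih]
    show Matrix.toEuclideanCLM (𝕜 := ℂ) (slotMat Xi.1 Xi.2)
      ((WithLp.equiv 2 ((Fin n → ι) → ℂ)).symm fun p => ∏ k, updSeq L w k (p k)) = _
    rw [Matrix.toEuclideanCLM_piLp_equiv_symm]
    unfold tensorF updSeq
    rw [List.foldr_cons]
    congr 1
    rw [Matrix.toLin'_apply, slotMat_mulVec_tensor]

lemma updSeq_not_mem (L : List (Matrix ι ι ℂ × Fin n)) (w : Fin n → ι → ℂ)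
    (i : Fin n) (hi : i ∉ L.map Prod.snd) : updSeq L w i = w i := by
  induction L with
  | nil => rfl
  | cons Xi L ih =>
    simp only [List.map_cons, List.mem_cons, not_or] at hi
    unfold updSeq
    rw [List.foldr_cons, Function.update_of_ne hi.1]
    exact ih hi.2

lemma updSeq_mem (L : List (Matrix ι ι ℂ × Fin n)) (w : Fin n → ι → ℂ)
    (h : (L.map Prod.snd).Nodup) (Xi : Matrix ι ι ℂ × Fin n) (hXi : Xi ∈ L) :
    updSeq L w Xi.2 = Xi.1 *ᵥ w Xi.2 := by
  induction L with
  | nil => exact absurd hXi (List.not_mem_nil)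
  | cons Yj L ih =>
    rw [List.map_cons, List.nodup_cons] at h
    rcases List.mem_cons.1 hXi with rfl | hmem
    · unfold updSeq
      rw [List.foldr_cons, Function.update_self]
      show Xi.1 *ᵥ updSeq L w Xi.2 = Xi.1 *ᵥ w Xi.2
      rw [updSeq_not_mem L w Xi.2 h.1]
    · have hne : Xi.2 ≠ Yj.2 := by
        intro he
        exact h.1 (he ▸ List.mem_map_of_mem (f := Prod.snd) hmem)
      unfold updSeq
      rw [List.foldr_cons, Function.update_of_ne hne]
      exact ih h.2 hmem

lemma tensorVec_eq_tensorF (v : EuclideanSpace ℂ ι) :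
    tensorVec v n = tensorF (fun _ a => v a) := rfl

lemma sum_conj_self (v : EuclideanSpace ℂ ι) (hv : ‖v‖ = 1) :
    ∑ a, starRingEnd ℂ (v a) * v a = 1 := by
  have h : (inner ℂ v v : ℂ) = (‖v‖ : ℂ) ^ 2 := inner_self_eq_norm_sq_to_K v
  rw [PiLp.inner_apply] at h
  simp only [RCLike.inner_apply] at h
  have h' : ∑ a, starRingEnd ℂ (v a) * v a = ∑ x, v x * starRingEnd ℂ (v x) :=
    Finset.sum_congr rfl fun a _ => mul_comm _ _
  rw [h', h, hv]
  norm_num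

lemma cf_expand {k : ℕ} (M : Fin k → Matrix ι ι ℂ) (v : EuclideanSpace ℂ ι)
    (f : Fin k → Fin n) :
    (inner ℂ ((List.ofFn fun j => Matrix.toEuclideanCLM (𝕜 := ℂ)
        (slotMat (M j) (f j))).prod (tensorVec v n)) (tensorVec v n) : ℂ)
      = ∏ i : Fin n, ∑ a, starRingEnd ℂ
          (updSeq (List.ofFn fun j => (M j, f j)) (fun _ a => v a) i a) * v a := by
  have h2 : (List.ofFn fun j => Matrix.toEuclideanCLM (𝕜 := ℂ) (slotMat (M j) (f j)))
      = (List.ofFn fun j => (M j, f j)).map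
          fun Xi => Matrix.toEuclideanCLM (𝕜 := ℂ) (slotMat Xi.1 Xi.2) := by
    rw [List.map_ofFn]; rfl
  rw [tensorVec_eq_tensorF, h2, prod_slot_apply, inner_tensorF]

lemma toCLM_apply_vec {ι : Type*} [Fintype ι] [DecidableEq ι] (A : Matrix ι ι ℂ)
    (v : EuclideanSpace ℂ ι) :
    Matrix.toEuclideanCLM (𝕜 := ℂ) A v = (WithLp.equiv 2 (ι → ℂ)).symm (A *ᵥ fun a => v a) := by
  have : v = (WithLp.equiv 2 (ι → ℂ)).symm (fun a => v a) := rfl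
  conv_lhs => rw [this]
  rw [Matrix.toEuclideanCLM_piLp_equiv_symm, Matrix.toLin'_apply]

lemma cf_inj_eq {k : ℕ} (M : Fin k → Matrix ι ι ℂ) (v : EuclideanSpace ℂ ι) (hv : ‖v‖ = 1)
    (f : Fin k → Fin n) (hf : Function.Injective f) :
    (inner ℂ ((List.ofFn fun j => Matrix.toEuclideanCLM (𝕜 := ℂ)
        (slotMat (M j) (f j))).prod (tensorVec v n)) (tensorVec v n) : ℂ)
      = ∏ j, (inner ℂ (Matrix.toEuclideanCLM (𝕜 := ℂ) (M j) v) v : ℂ) := by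
  rw [cf_expand]
  set L : List (Matrix ι ι ℂ × Fin n) := List.ofFn fun j => (M j, f j) with hL
  have hmap : L.map Prod.snd = List.ofFn f := by rw [hL, List.map_ofFn]; rfl
  have hnd : (L.map Prod.snd).Nodup := by rw [hmap]; exact List.nodup_ofFn.2 hf
  have hout : ∀ i : Fin n, i ∉ Finset.univ.image f →
      (∑ a, starRingEnd ℂ (updSeq L (fun _ a => v a) i a) * v a) = 1 := by
    intro i hi
    have : i ∉ L.map Prod.snd := by
      rw [hmap]
      intro hmem
      obtain ⟨j, hji⟩ := List.mem_ofFn.1 hmem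
      exact hi (Finset.mem_image.2 ⟨j, Finset.mem_univ _, hji⟩)
    rw [updSeq_not_mem L _ i this]
    exact sum_conj_self v hv
  rw [← Finset.prod_subset (Finset.subset_univ (Finset.univ.image f)) (fun i _ hi => hout i hi)]
  rw [Finset.prod_image (fun a _ b _ h => hf h)]
  refine Finset.prod_congr rfl fun j _ => ?_
  have hmem : ((M j, f j) : Matrix ι ι ℂ × Fin n) ∈ L := by
    rw [hL]
    exact List.mem_ofFn.2 ⟨j, rfl⟩
  have := updSeq_mem L (fun _ a => v a) hnd (M j, f j) hmem
  rw [this]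
  rw [toCLM_apply_vec, PiLp.inner_apply]
  simp only [RCLike.inner_apply, WithLp.equiv_symm_pi_apply]
  exact Finset.sum_congr rfl fun a _ => mul_comm _ _

lemma norm_tensorVec (v : EuclideanSpace ℂ ι) (hv : ‖v‖ = 1) :
    ‖tensorVec v (n := n)‖ = 1 := by
  have h1 : (inner ℂ (tensorVec v n) (tensorVec v n) : ℂ) = 1 := by
    rw [tensorVec_eq_tensorF, inner_tensorF]
    refine Finset.prod_eq_one fun i _ => sum_conj_self v hv
  have h2 : ((‖tensorVec v n‖ : ℝ) : ℂ) ^ 2 = 1 := by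
    rw [← h1]
    exact (inner_self_eq_norm_sq_to_K (tensorVec v n)).symm
  have h3 : ‖tensorVec v n‖ ^ 2 = 1 := by exact_mod_cast h2
  exact (pow_left_inj₀ (norm_nonneg _) zero_le_one two_ne_zero).1 (by rw [h3, one_pow])

lemma cf_norm_le {k : ℕ} (hk : 0 < k) (M : Fin k → Matrix ι ι ℂ) {K : ℝ}
    (hK : ∀ j, ‖Matrix.toEuclideanCLM (𝕜 := ℂ) (M j)‖ ≤ K)
    (v : EuclideanSpace ℂ ι) (hv : ‖v‖ = 1) (f : Fin k → Fin n) :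
    ‖(inner ℂ ((List.ofFn fun j => Matrix.toEuclideanCLM (𝕜 := ℂ)
        (slotMat (M j) (f j))).prod (tensorVec v n)) (tensorVec v n) : ℂ)‖
      ≤ max 1 K ^ k := by
  set T := (List.ofFn fun j => Matrix.toEuclideanCLM (𝕜 := ℂ) (slotMat (M j) (f j))).prod
  have hT : ‖T‖ ≤ max 1 K ^ k := by
    have hne : (List.ofFn fun j => Matrix.toEuclideanCLM (𝕜 := ℂ) (slotMat (M j) (f j))) ≠ [] := by
      intro h
      have := congrArg List.length h
      simp at this
      omega
    refine le_trans (List.norm_prod_le' hne) ?_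
    rw [List.map_ofFn, List.prod_ofFn]
    calc ∏ j, ‖Matrix.toEuclideanCLM (𝕜 := ℂ) (slotMat (M j) (f j))‖
        ≤ ∏ _j : Fin k, max 1 K := by
          refine Finset.prod_le_prod (fun j _ => norm_nonneg _) fun j _ => ?_
          exact le_trans (norm_slotMat_le (M j) (f j)) (le_trans (hK j) (le_max_right 1 K))
      _ = max 1 K ^ k := by rw [Finset.prod_const, Finset.card_univ, Fintype.card_fin]
  calc ‖(inner ℂ (T (tensorVec v n)) (tensorVec v n) : ℂ)‖
      ≤ ‖T (tensorVec v n)‖ * ‖tensorVec v (n := n)‖ := norm_inner_le_norm _ _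
    _ ≤ ‖T‖ * ‖tensorVec v (n := n)‖ * ‖tensorVec v (n := n)‖ := by
        refine mul_le_mul_of_nonneg_right (ContinuousLinearMap.le_opNorm _ _) (norm_nonneg _)
    _ = ‖T‖ := by rw [norm_tensorVec v hv]; ring
    _ ≤ max 1 K ^ k := hT

lemma P_norm_le {k : ℕ} (M : Fin k → Matrix ι ι ℂ) {K : ℝ}
    (hK : ∀ j, ‖Matrix.toEuclideanCLM (𝕜 := ℂ) (M j)‖ ≤ K)
    (v : EuclideanSpace ℂ ι) (hv : ‖v‖ = 1) :
    ‖∏ j, (inner ℂ (Matrix.toEuclideanCLM (𝕜 := ℂ) (M j) v) v : ℂ)‖ ≤ max 1 K ^ k := by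
  rw [norm_prod]
  calc ∏ j, ‖(inner ℂ (Matrix.toEuclideanCLM (𝕜 := ℂ) (M j) v) v : ℂ)‖
      ≤ ∏ _j : Fin k, max 1 K := by
        refine Finset.prod_le_prod (fun j _ => norm_nonneg _) fun j _ => ?_
        calc ‖(inner ℂ (Matrix.toEuclideanCLM (𝕜 := ℂ) (M j) v) v : ℂ)‖
            ≤ ‖Matrix.toEuclideanCLM (𝕜 := ℂ) (M j) v‖ * ‖v‖ := norm_inner_le_norm _ _
          _ ≤ ‖Matrix.toEuclideanCLM (𝕜 := ℂ) (M j)‖ * ‖v‖ * ‖v‖ :=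
              mul_le_mul_of_nonneg_right (ContinuousLinearMap.le_opNorm _ _) (norm_nonneg _)
          _ = ‖Matrix.toEuclideanCLM (𝕜 := ℂ) (M j)‖ := by rw [hv]; ring
          _ ≤ max 1 K := le_trans (hK j) (le_max_right 1 K)
    _ = max 1 K ^ k := by rw [Finset.prod_const, Finset.card_univ, Fintype.card_fin]

lemma inner_expand {k : ℕ} (M : Fin k → Matrix ι ι ℂ) (v : EuclideanSpace ℂ ι) :
    (inner ℂ ((List.ofFn fun j => Matrix.toEuclideanCLM (𝕜 := ℂ) (slotSum (M j) n)).prod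
        (tensorVec v n)) (tensorVec v n) : ℂ)
      = ∑ f : Fin k → Fin n,
          (inner ℂ ((List.ofFn fun j => Matrix.toEuclideanCLM (𝕜 := ℂ)
            (slotMat (M j) (f j))).prod (tensorVec v n)) (tensorVec v n) : ℂ) := by
  have h1 : ∀ j, Matrix.toEuclideanCLM (𝕜 := ℂ) (slotSum (M j) n)
      = ∑ i : Fin n, Matrix.toEuclideanCLM (𝕜 := ℂ) (slotMat (M j) i) := by
    intro j
    rw [slotSum_eq]
    exact map_sum (Matrix.toEuclideanCLM (𝕜 := ℂ)) _ _
  simp_rw [h1]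
  rw [list_prod_sum k (fun j i => Matrix.toEuclideanCLM (𝕜 := ℂ) (slotMat (M j) i))]
  rw [ContinuousLinearMap.sum_apply, sum_inner]

end Aux

section Main
open Finset Matrix

/-- The core estimate for the convergence of Berezin covariant symbols:
for operators `X_1, …, X_k` of norm at most `K` and a unit vector `ξ`, with
`T_n = n^{−k}⟨U^{(n)}_{X_1}⋯U^{(n)}_{X_k} ξ^{⊗n}, ξ^{⊗n}⟩` one has
`|T_n − Π_j ⟨X_j ξ, ξ⟩| ≤ n^{−k}·2·p(n)·max(1,K)^k` for `n > k`, where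
`p(n) = n^k − n(n−1)⋯(n−k+1)`; in particular `T_n → Π_j ⟨X_j ξ, ξ⟩`. -/
theorem stmt_19 {ι : Type*} [Fintype ι] [DecidableEq ι]
    (k : ℕ) (hk : 0 < k) (M : Fin k → Matrix ι ι ℂ) (K : ℝ)
    (hK : ∀ j, ‖Matrix.toEuclideanCLM (𝕜 := ℂ) (M j)‖ ≤ K)
    (v : EuclideanSpace ℂ ι) (hv : ‖v‖ = 1) :
    (∀ n : ℕ, k < n →
      ‖Tseq M v n - ∏ j, (inner ℂ (Matrix.toEuclideanCLM (𝕜 := ℂ) (M j) v) v : ℂ)‖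
        ≤ (((n : ℝ) ^ k - ∏ i ∈ Finset.range k, ((n : ℝ) - i)) * 2 * max 1 K ^ k)
            / (n : ℝ) ^ k) ∧
    Tendsto (fun n : ℕ => Tseq M v n) atTop
      (nhds (∏ j, (inner ℂ (Matrix.toEuclideanCLM (𝕜 := ℂ) (M j) v) v : ℂ))) := by
  classical
  set P : ℂ := ∏ j, (inner ℂ (Matrix.toEuclideanCLM (𝕜 := ℂ) (M j) v) v : ℂ) with hP
  have hmax : (0:ℝ) < max 1 K ^ k := pow_pos (lt_of_lt_of_le one_pos (le_max_left 1 K)) k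
  have main : ∀ n : ℕ, k < n →
      ‖Tseq M v n - P‖
        ≤ (((n : ℝ) ^ k - ∏ i ∈ Finset.range k, ((n : ℝ) - i)) * 2 * max 1 K ^ k)
            / (n : ℝ) ^ k := by
    intro n hn
    have hn0 : 0 < n := lt_trans hk hn
    have hnC : ((n : ℂ)) ^ k ≠ 0 := pow_ne_zero _ (Nat.cast_ne_zero.2 hn0.ne')
    -- the c-values
    set c : (Fin k → Fin n) → ℂ := fun f =>
      (inner ℂ ((List.ofFn fun j => Matrix.toEuclideanCLM (𝕜 := ℂ)
        (slotMat (M j) (f j))).prod (tensorVec v n)) (tensorVec v n) : ℂ) with hc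
    have hT : Tseq M v n = ((n : ℂ) ^ k)⁻¹ * ∑ f : Fin k → Fin n, c f := by
      rw [Tseq, inner_expand, _root_.zpow_neg, zpow_natCast]
    have hcard : (Fintype.card (Fin k → Fin n)) = n ^ k := by
      simp [Fintype.card_fun]
    have hsum : (∑ f : Fin k → Fin n, c f) - (n : ℂ) ^ k * P
        = ∑ f : Fin k → Fin n, (c f - P) := by
      rw [Finset.sum_sub_distrib, Finset.sum_const, Finset.card_univ, hcard]
      push_cast
      ring
    have hdiff : Tseq M v n - P
        = ((n : ℂ) ^ k)⁻¹ * ∑ f : Fin k → Fin n, (c f - P) := by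
      rw [hT, ← hsum]
      field_simp
    -- split by injectivity
    have hzero : ∀ f ∈ Finset.univ.filter (fun f : Fin k → Fin n => Function.Injective f),
        c f - P = 0 := by
      intro f hf
      simp only [Finset.mem_filter] at hf
      exact sub_eq_zero.mpr ((cf_inj_eq M v hv f hf.2).trans hP.symm)
    have hsplit : ∑ f : Fin k → Fin n, (c f - P)
        = ∑ f ∈ Finset.univ.filter (fun f : Fin k → Fin n => ¬ Function.Injective f),
            (c f - P) := by
      rw [← Finset.sum_filter_add_sum_filter_not Finset.univ
        (fun f : Fin k → Fin n => Function.Injective f) (fun f => c f - P)]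
      rw [Finset.sum_eq_zero hzero, zero_add]
    have hbound : ∀ f : Fin k → Fin n, ‖c f - P‖ ≤ 2 * max 1 K ^ k := by
      intro f
      calc ‖c f - P‖ ≤ ‖c f‖ + ‖P‖ := norm_sub_le _ _
        _ ≤ max 1 K ^ k + max 1 K ^ k := add_le_add (cf_norm_le hk M hK v hv f)
            (P_norm_le M hK v hv)
        _ = 2 * max 1 K ^ k := by ring
    have hcardinj : (Finset.univ.filter (fun f : Fin k → Fin n => Function.Injective f)).card
        = n.descFactorial k := by
      rw [← Fintype.card_subtype]
      rw [Fintype.card_congr (Equiv.subtypeInjectiveEquivEmbedding (Fin k) (Fin n))]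
      rw [Fintype.card_embedding_eq, Fintype.card_fin, Fintype.card_fin]
    have hcardnot : (Finset.univ.filter
        (fun f : Fin k → Fin n => ¬ Function.Injective f)).card = n ^ k - n.descFactorial k := by
      have h := Finset.card_filter_add_card_filter_not
        (s := (Finset.univ : Finset (Fin k → Fin n)))
        (p := fun f : Fin k → Fin n => Function.Injective f)
      rw [Finset.card_univ, hcard, hcardinj] at h
      omega
    have hnormsum : ‖∑ f ∈ Finset.univ.filter
          (fun f : Fin k → Fin n => ¬ Function.Injective f), (c f - P)‖
        ≤ ((n ^ k - n.descFactorial k : ℕ) : ℝ) * (2 * max 1 K ^ k) := by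
      refine le_trans (norm_sum_le _ _) ?_
      rw [← hcardnot]
      exact Finset.sum_le_card_nsmul _ _ _ (fun f _ => hbound f) |>.trans (by
        rw [nsmul_eq_mul])
    have hdesc : ((n.descFactorial k : ℕ) : ℝ) = ∏ i ∈ Finset.range k, ((n : ℝ) - i) := by
      rw [Nat.descFactorial_eq_prod_range, Nat.cast_prod]
      refine Finset.prod_congr rfl fun i hi => ?_
      have : i ≤ n := le_of_lt (lt_trans (Finset.mem_range.1 hi) hn)
      push_cast [Nat.cast_sub this]
      ring
    have hcast : ((n ^ k - n.descFactorial k : ℕ) : ℝ)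
        = (n : ℝ) ^ k - ∏ i ∈ Finset.range k, ((n : ℝ) - i) := by
      rw [Nat.cast_sub (Nat.descFactorial_le_pow n k), hdesc]
      push_cast
      ring
    calc ‖Tseq M v n - P‖
        = ‖((n : ℂ) ^ k)⁻¹‖ * ‖∑ f ∈ Finset.univ.filter
            (fun f : Fin k → Fin n => ¬ Function.Injective f), (c f - P)‖ := by
          rw [hdiff, hsplit, norm_mul]
      _ ≤ ((n : ℝ) ^ k)⁻¹ * (((n : ℝ) ^ k - ∏ i ∈ Finset.range k, ((n : ℝ) - i))
            * (2 * max 1 K ^ k)) := by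
          rw [norm_inv, norm_pow, Complex.norm_natCast]
          refine mul_le_mul_of_nonneg_left ?_ (by positivity)
          rw [← hcast]
          exact hnormsum
      _ = (((n : ℝ) ^ k - ∏ i ∈ Finset.range k, ((n : ℝ) - i)) * 2 * max 1 K ^ k)
            / (n : ℝ) ^ k := by
          rw [div_eq_inv_mul]
          ring
  refine ⟨main, ?_⟩
  -- Tendsto part
  rw [tendsto_iff_norm_sub_tendsto_zero]
  have hg : Tendsto (fun n : ℕ => (1 - ∏ i ∈ Finset.range k, (1 - (i : ℝ) / n))
      * (2 * max 1 K ^ k)) atTop (nhds 0) := by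
    have hprod : Tendsto (fun n : ℕ => ∏ i ∈ Finset.range k, (1 - (i : ℝ) / n)) atTop
        (nhds (∏ i ∈ Finset.range k, (1 : ℝ))) := by
      refine tendsto_finset_prod _ fun i _ => ?_
      have := tendsto_const_div_atTop_nhds_zero_nat (i : ℝ)
      have h2 := (tendsto_const_nhds (x := (1:ℝ)) (f := atTop)).sub this
      simpa using h2
    rw [Finset.prod_const_one] at hprod
    have := ((tendsto_const_nhds (x := (1:ℝ)) (f := atTop)).sub hprod).mul_const
      (2 * max 1 K ^ k)
    simpa using this
  have hbound2 : Tendsto (fun n : ℕ => ((((n:ℝ))^k - ∏ i ∈ Finset.range k, ((n:ℝ) - i))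
      * 2 * max 1 K ^ k) / (n:ℝ)^k) atTop (nhds 0) := by
    refine hg.congr' ?_
    filter_upwards [eventually_gt_atTop k] with n hn
    have hn0 : (0:ℝ) < n := by exact_mod_cast lt_trans hk hn
    have hnk : ((n:ℝ)) ^ k ≠ 0 := by positivity
    have hfac : ∀ i ∈ Finset.range k, 1 - (i:ℝ)/n = ((n:ℝ) - i)/n := by
      intro i _
      field_simp
    have hprod_eq : ∏ i ∈ Finset.range k, (1 - (i:ℝ)/n)
        = (∏ i ∈ Finset.range k, ((n:ℝ) - i)) / (n:ℝ)^k := by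
      rw [Finset.prod_congr rfl hfac, Finset.prod_div_distrib, Finset.prod_const,
        Finset.card_range]
    rw [hprod_eq]
    field_simp
  exact squeeze_zero' (Eventually.of_forall fun n => norm_nonneg _)
    (by filter_upwards [eventually_gt_atTop k] with n hn; exact main n hn) hbound2

end Main
end
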